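/- Let r ≥ 2 and 2 ≤ l ≤ r. For variables λ_1, ..., λ_r, let σ_{l-1} denote the (l-1)-st elementary symmetric polynomial in λ_1,...,λ_r, let σ_{l-1;i} denote the (l-1)-st elementary symmetric polynomial in the r-1 variables omitting λ_i. Then, as an identity of rational functions (or of polynomials after clearing denominators): Σ_{1 ≤ i < j ≤ r} (λ_i σ_{l-1;i} − λ_j σ_{l-1;j})/(λ_i − λ_j) = (1/2)(r−l)(r−l+1) · σ_{l-1}. -/

import Mathlib

open Finset

lemma split_lemma {r : ℕ} (lam : Fin r → ℂ) (t : Finset (Fin r)) {j : Fin r} (hj : j ∈ t)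
    (k : ℕ) :
    ∑ A ∈ t.powersetCard (k+1), ∏ a ∈ A, lam a
      = ∑ A ∈ (t.erase j).powersetCard (k+1), ∏ a ∈ A, lam a
        + lam j * ∑ A ∈ (t.erase j).powersetCard k, ∏ a ∈ A, lam a := by
  conv_lhs => rw [← Finset.insert_erase hj]
  rw [Finset.powersetCard_succ_insert (Finset.notMem_erase _ _), Finset.sum_union, Finset.sum_image, Finset.mul_sum]
  · congr 1
    refine Finset.sum_congr rfl fun A hA => ?_
    have hjA : j ∉ A := fun h =>
      (Finset.notMem_erase j t) ((Finset.mem_powersetCard.mp hA).1 h)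
    rw [Finset.prod_insert hjA]
  · intro A hA B hB h
    have hjA : j ∉ A := fun h' =>
      (Finset.notMem_erase j t) ((Finset.mem_powersetCard.mp hA).1 h')
    have hjB : j ∉ B := fun h' =>
      (Finset.notMem_erase j t) ((Finset.mem_powersetCard.mp hB).1 h')
    have := congrArg (fun s => Finset.erase s j) h
    simpa [Finset.erase_insert hjA, Finset.erase_insert hjB] using this
  · rw [Finset.disjoint_left]
    intro A hA hA'
    obtain ⟨B, _, rfl⟩ := Finset.mem_image.mp hA'
    exact (fun h' => (Finset.notMem_erase j t) ((Finset.mem_powersetCard.mp hA).1 h'))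
      (Finset.mem_insert_self j B)

lemma count_lemma {r : ℕ} (s : Finset (Fin r)) :
    2 * (Finset.univ.filter
        (fun p : Fin r × Fin r => p.1 < p.2 ∧ p.1 ∈ s ∧ p.2 ∈ s)).card
      = s.card * (s.card - 1) := by
  have h1 : (Finset.univ.filter
        (fun p : Fin r × Fin r => p.1 < p.2 ∧ p.1 ∈ s ∧ p.2 ∈ s))
      = s.offDiag.filter (fun p => p.1 < p.2) := by
    ext p
    simp only [Finset.mem_filter, Finset.mem_univ, true_and, Finset.mem_offDiag]
    constructor
    · rintro ⟨h, h1, h2⟩; exact ⟨⟨h1, h2, ne_of_lt h⟩, h⟩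
    · rintro ⟨⟨h1, h2, _⟩, h⟩; exact ⟨h, h1, h2⟩
  have h2 : (s.offDiag.filter (fun p => p.1 < p.2)).card
      = (s.offDiag.filter (fun p => ¬ p.1 < p.2)).card := by
    apply Finset.card_bij (fun p _ => (p.2, p.1))
    · rintro ⟨a, b⟩ hp
      simp only [Finset.mem_filter, Finset.mem_offDiag] at hp ⊢
      exact ⟨⟨hp.1.2.1, hp.1.1, hp.1.2.2.symm⟩, not_lt_of_gt hp.2⟩
    · rintro ⟨a, b⟩ ha ⟨c, d⟩ hc h
      simpa [Prod.ext_iff, and_comm] using h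
    · rintro ⟨a, b⟩ hp
      simp only [Finset.mem_filter, Finset.mem_offDiag] at hp
      refine ⟨(b, a), ?_, rfl⟩
      simp only [Finset.mem_filter, Finset.mem_offDiag]
      exact ⟨⟨hp.1.2.1, hp.1.1, hp.1.2.2.symm⟩, lt_of_le_of_ne (not_lt.mp hp.2) hp.1.2.2.symm⟩
  have h3 : (s.offDiag.filter (fun p => p.1 < p.2)).card
      + (s.offDiag.filter (fun p => ¬ p.1 < p.2)).card = s.offDiag.card := by
    simpa using Finset.card_filter_add_card_filter_not
      (s := s.offDiag) (p := fun p : Fin r × Fin r => p.1 < p.2)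
  have key : ∀ n : ℕ, n * n - n = n * (n - 1) := by
    intro n
    cases n with
    | zero => rfl
    | succ n => rw [Nat.succ_sub_one, Nat.mul_succ, Nat.add_sub_cancel]
  rw [h1, two_mul]
  nth_rewrite 2 [h2]
  rw [h3, Finset.offDiag_card, key]

theorem stmt13 (r l : ℕ) (hr : 2 ≤ r) (hl : 2 ≤ l) (hlr : l ≤ r)
    (lam : Fin r → ℂ) (hinj : Function.Injective lam)
    (σ : ℕ → Finset (Fin r) → ℂ)
    (hσ : ∀ k T, σ k T = ∑ A ∈ T.powersetCard k, ∏ a ∈ A, lam a) :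
    ∑ p ∈ Finset.univ.filter (fun p : Fin r × Fin r => p.1 < p.2),
        (lam p.1 * σ (l - 1) (Finset.univ.erase p.1)
          - lam p.2 * σ (l - 1) (Finset.univ.erase p.2)) / (lam p.1 - lam p.2)
      = (1 / 2 : ℂ) * ((r : ℂ) - l) * ((r : ℂ) - l + 1) * σ (l - 1) Finset.univ := by
  obtain ⟨m, rfl⟩ : ∃ m, l = m + 2 := ⟨l - 2, by omega⟩
  simp only [show m + 2 - 1 = m + 1 from rfl]
  have step1 : ∀ p : Fin r × Fin r, p.1 < p.2 →
      (lam p.1 * σ (m+1) (Finset.univ.erase p.1)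
        - lam p.2 * σ (m+1) (Finset.univ.erase p.2)) / (lam p.1 - lam p.2)
        = ∑ A ∈ (Finset.univ.powersetCard (m+1)).filter
            (fun A => p.1 ∉ A ∧ p.2 ∉ A), ∏ a ∈ A, lam a := by
    intro p hp
    have hne12 : p.1 ≠ p.2 := ne_of_lt hp
    have hden : lam p.1 - lam p.2 ≠ 0 :=
      sub_ne_zero_of_ne (fun h => hne12 (hinj h))
    have h1 : p.2 ∈ (Finset.univ : Finset (Fin r)).erase p.1 := by
      simp [hne12.symm]
    have h2 : p.1 ∈ (Finset.univ : Finset (Fin r)).erase p.2 := by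
      simp [hne12]
    have e1 := split_lemma lam _ h1 m
    have e2 := split_lemma lam _ h2 m
    rw [Finset.erase_right_comm] at e2
    have hfil : ((Finset.univ.erase p.1).erase p.2).powersetCard (m+1)
        = (Finset.univ.powersetCard (m+1)).filter (fun A => p.1 ∉ A ∧ p.2 ∉ A) := by
      ext A
      simp only [Finset.mem_powersetCard, Finset.mem_filter, Finset.subset_erase,
        Finset.subset_univ, true_and]
      tauto
    rw [hσ, hσ, e1, e2, div_eq_iff hden, hfil]
    ring
  rw [Finset.sum_congr rfl (fun p hp => step1 p (Finset.mem_filter.mp hp).2)]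
  have step2 : ∀ p : Fin r × Fin r,
      ∑ A ∈ (Finset.univ.powersetCard (m+1)).filter
          (fun A => p.1 ∉ A ∧ p.2 ∉ A), ∏ a ∈ A, lam a
      = ∑ A ∈ Finset.univ.powersetCard (m+1),
          if p.1 ∉ A ∧ p.2 ∉ A then ∏ a ∈ A, lam a else 0 :=
    fun p => Finset.sum_filter _ _
  rw [Finset.sum_congr rfl (fun p _ => step2 p), Finset.sum_comm]
  have step3 : ∀ A ∈ Finset.univ.powersetCard (m+1),
      (∑ p ∈ Finset.univ.filter (fun p : Fin r × Fin r => p.1 < p.2),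
        if p.1 ∉ A ∧ p.2 ∉ A then ∏ a ∈ A, lam a else 0)
      = ((1:ℂ)/2 * ((r:ℂ) - (m+2 : ℕ)) * ((r:ℂ) - (m+2 : ℕ) + 1)) * ∏ a ∈ A, lam a := by
    intro A hA
    rw [← Finset.sum_filter, Finset.filter_filter, Finset.sum_const]
    have hAc : A.card = m+1 := (Finset.mem_powersetCard.mp hA).2
    have hcompl : (Aᶜ).card = r - (m+1) := by
      rw [Finset.card_compl, hAc]; simp
    have hset : Finset.univ.filter
          (fun p : Fin r × Fin r => p.1 < p.2 ∧ (p.1 ∉ A ∧ p.2 ∉ A))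
        = Finset.univ.filter
          (fun p : Fin r × Fin r => p.1 < p.2 ∧ p.1 ∈ Aᶜ ∧ p.2 ∈ Aᶜ) := by
      ext p; simp [Finset.mem_compl]
    rw [hset]
    have hcount := count_lemma (Aᶜ)
    rw [hcompl] at hcount
    have hsub : r - (m+1) - 1 = r - (m+2) := by omega
    rw [hsub] at hcount
    have hcast := congrArg (Nat.cast : ℕ → ℂ) hcount
    push_cast [Nat.cast_sub (show m+1 ≤ r by omega),
      Nat.cast_sub (show m+2 ≤ r by omega)] at hcast
    rw [nsmul_eq_mul]
    have : ((Finset.univ.filter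
        (fun p : Fin r × Fin r => p.1 < p.2 ∧ p.1 ∈ Aᶜ ∧ p.2 ∈ Aᶜ)).card : ℂ)
        = (1:ℂ)/2 * ((r:ℂ) - (m+2 : ℕ)) * ((r:ℂ) - (m+2 : ℕ) + 1) := by
      push_cast
      linear_combination hcast / 2
    rw [this]
  rw [Finset.sum_congr rfl step3, ← Finset.mul_sum, hσ]
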